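/- Let m, n ≥ 1 and let A : ℝⁿ → M_m(ℂ) be a function. Suppose there exist D' > 0 and l ∈ ℕ with ‖A(ξ)‖ ≤ D'(1+|ξ|)^l for all ξ ∈ ℝⁿ, and there exists C > 0 with max{Re λ : λ ∈ σ(A(ξ))} ≤ C(1 + log(1+|ξ|)) for all ξ ∈ ℝⁿ. Then for every T > 0 there exists D > 0 such that ‖exp(tA(ξ))‖ ≤ D (1+|ξ|)^{TC + l(m−1)} whenever t ∈ [0,T] and ξ ∈ ℝⁿ. -/

import Mathlib

open scoped Matrix.Norms.L2Operator
open NormedSpace Matrix Set Module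

namespace ExpPolyAux

local notation "⟪" x ", " y "⟫" => @inner ℂ _ _ x y

variable {m : ℕ}

lemma coord_le_norm (y : EuclideanSpace ℂ (Fin m)) (i : Fin m) : ‖y i‖ ≤ ‖y‖ := by
  rw [EuclideanSpace.norm_eq]
  have h1 : ‖y i‖ = Real.sqrt (‖y i‖ ^ 2) := (Real.sqrt_sq (norm_nonneg _)).symm
  rw [h1]
  apply Real.sqrt_le_sqrt
  exact Finset.single_le_sum (f := fun k => ‖y k‖ ^ 2) (fun k _ => sq_nonneg _)
    (Finset.mem_univ i)

lemma opNorm_le (M : Matrix (Fin m) (Fin m) ℂ) {c : ℝ} (hc : 0 ≤ c)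
    (h : ∀ x : EuclideanSpace ℂ (Fin m),
      ‖(EuclideanSpace.equiv (Fin m) ℂ).symm (M *ᵥ (WithLp.equiv 2 (Fin m → ℂ) x))‖ ≤ c * ‖x‖) :
    ‖M‖ ≤ c := by
  rw [Matrix.l2_opNorm_def]
  exact ContinuousLinearMap.opNorm_le_bound _ hc h

lemma entry_le (M : Matrix (Fin m) (Fin m) ℂ) (i j : Fin m) : ‖M i j‖ ≤ ‖M‖ := by
  have h := Matrix.l2_opNorm_mulVec M (EuclideanSpace.single j (1 : ℂ))
  rw [EuclideanSpace.norm_single, norm_one, mul_one] at h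
  refine le_trans (le_trans ?_ (coord_le_norm
    ((EuclideanSpace.equiv (Fin m) ℂ).symm (M *ᵥ (WithLp.equiv 2 (Fin m → ℂ)
      (EuclideanSpace.single j (1 : ℂ))))) i)) h
  have : (M *ᵥ (WithLp.equiv 2 (Fin m → ℂ) (EuclideanSpace.single j (1 : ℂ)))) i = M i j := by
    simp [Matrix.mulVec, dotProduct, EuclideanSpace.single_apply]
  rw [show ((EuclideanSpace.equiv (Fin m) ℂ).symm (M *ᵥ (WithLp.equiv 2 (Fin m → ℂ)
      (EuclideanSpace.single j (1 : ℂ))))) i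
      = (M *ᵥ (WithLp.equiv 2 (Fin m → ℂ) (EuclideanSpace.single j (1 : ℂ)))) i from rfl, this]

lemma norm_single_le (i j : Fin m) (c : ℂ) : ‖Matrix.single i j c‖ ≤ ‖c‖ := by
  apply opNorm_le _ (norm_nonneg c)
  intro x
  have hv : (Matrix.single i j c) *ᵥ (WithLp.equiv 2 (Fin m → ℂ) x)
      = Pi.single i (c * x j) := by
    ext k
    simp [Matrix.single, Matrix.mulVec, dotProduct, Pi.single_apply, ite_and,
      Finset.sum_ite_eq, eq_comm]
  rw [hv]
  have : ((EuclideanSpace.equiv (Fin m) ℂ).symm (Pi.single i (c * x j)))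
      = EuclideanSpace.single i (c * x j) := rfl
  rw [this, EuclideanSpace.norm_single, norm_mul]
  exact mul_le_mul_of_nonneg_left (coord_le_norm x j) (norm_nonneg c)

lemma norm_le_sum (M : Matrix (Fin m) (Fin m) ℂ) : ‖M‖ ≤ ∑ i, ∑ j, ‖M i j‖ := by
  conv_lhs => rw [Matrix.matrix_eq_sum_single M]
  refine le_trans (norm_sum_le _ _) (Finset.sum_le_sum fun i _ => ?_)
  refine le_trans (norm_sum_le _ _) (Finset.sum_le_sum fun j _ => ?_)
  exact norm_single_le i j (M i j)

lemma norm_diagonal_le (v : Fin m → ℂ) {c : ℝ} (hc : 0 ≤ c) (h : ∀ i, ‖v i‖ ≤ c) :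
    ‖Matrix.diagonal v‖ ≤ c := by
  apply opNorm_le _ hc
  intro x
  have hv : (Matrix.diagonal v) *ᵥ (WithLp.equiv 2 (Fin m → ℂ) x)
      = fun i => v i * x i := by
    ext k; rw [Matrix.mulVec_diagonal]; rfl
  rw [hv]
  have hx : ‖x‖ = Real.sqrt (∑ i, ‖x i‖ ^ 2) := EuclideanSpace.norm_eq x
  have hy : ‖(EuclideanSpace.equiv (Fin m) ℂ).symm (fun i => v i * x i)‖
      = Real.sqrt (∑ i, ‖v i * x i‖ ^ 2) := EuclideanSpace.norm_eq _
  rw [hy, hx, ← Real.sqrt_sq hc, ← Real.sqrt_mul (sq_nonneg c)]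
  apply Real.sqrt_le_sqrt
  rw [Finset.mul_sum]
  refine Finset.sum_le_sum fun i _ => ?_
  rw [norm_mul, mul_pow]
  exact mul_le_mul_of_nonneg_right (pow_le_pow_left₀ (norm_nonneg _) (h i) 2) (sq_nonneg _)


lemma norm_exp_smul_diagonal_le (v : Fin m → ℂ) {a w : ℝ} (hw : 0 ≤ w)
    (hv : ∀ i, (v i).re ≤ a) :
    ‖exp (w • Matrix.diagonal v)‖ ≤ Real.exp (w * a) := by
  have h1 : w • Matrix.diagonal v = Matrix.diagonal (w • v) := by
    rw [Matrix.diagonal_smul]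
  rw [h1, Matrix.exp_diagonal]
  apply norm_diagonal_le _ (Real.exp_nonneg _)
  intro i
  simp only [Pi.exp_def]
  have : exp ((w • v) i) = Complex.exp (w • v i) := by
    rw [Complex.exp_eq_exp_ℂ]; rfl
  rw [this, Complex.norm_exp]
  apply Real.exp_le_exp.2
  have : (w • v i).re = w * (v i).re := by
    simp [Complex.smul_re]
  rw [this]
  exact mul_le_mul_of_nonneg_left (hv i) hw

lemma exp_core (v : Fin m → ℂ) (N : Matrix (Fin m) (Fin m) ℂ) {a : ℝ}
    (ha : 0 ≤ a) (hv : ∀ i, (v i).re ≤ a) :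
    ‖exp (Matrix.diagonal v + N)‖ ≤ Real.exp (a + ‖N‖) := by
  set Λ : Matrix (Fin m) (Fin m) ℂ := Matrix.diagonal v with hΛ
  set T : Matrix (Fin m) (Fin m) ℂ := Λ + N with hT
  set E : ℝ → Matrix (Fin m) (Fin m) ℂ := fun u => exp (u • T) with hE
  have hEcont : Continuous E :=
    continuous_iff_continuousAt.2 fun u => (hasDerivAt_exp_smul_const' (𝕂 := ℝ) T u).continuousAt
  set g : ℝ → ℝ := fun u => Real.exp (-(u * a)) * ‖E u‖ with hg
  have hgcont : Continuous g :=
    ((Real.continuous_exp.comp (continuous_id.mul continuous_const).neg)).mul hEcont.norm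
  have hgnonneg : ∀ u, 0 ≤ g u := fun u =>
    mul_nonneg (Real.exp_nonneg _) (norm_nonneg _)
  -- the key integral inequality
  have key : ∀ s ∈ Icc (0:ℝ) 1, g s ≤ 1 + ‖N‖ * ∫ u in (0:ℝ)..s, g u := by
    intro s hs
    set G : ℝ → Matrix (Fin m) (Fin m) ℂ := fun u => exp ((s - u) • Λ) * E u with hGdef
    have hG : ∀ u, HasDerivAt G (exp ((s - u) • Λ) * N * E u) u := by
      intro u
      have h1 : HasDerivAt (fun w : ℝ => exp (w • Λ)) (exp ((s - u) • Λ) * Λ) (s - u) :=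
        hasDerivAt_exp_smul_const Λ (s - u)
      have h2 : HasDerivAt (fun u : ℝ => s - u) (-1) u := (hasDerivAt_id u).const_sub s
      have h3 : HasDerivAt (fun u : ℝ => exp ((s - u) • Λ))
          ((-1 : ℝ) • (exp ((s - u) • Λ) * Λ)) u := h1.scomp u h2
      have h4 : HasDerivAt E (T * E u) u := hasDerivAt_exp_smul_const' T u
      have h5 := h3.mul h4
      refine h5.congr_deriv ?_
      simp only [hT, neg_smul, one_smul]
      noncomm_ring
    have hWcont : Continuous (fun u => exp ((s - u) • Λ) * N * E u) :=
      (((continuous_iff_continuousAt.2 fun w =>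
        (hasDerivAt_exp_smul_const (𝕂 := ℝ) Λ w).continuousAt).comp
        (continuous_const.sub continuous_id)).mul continuous_const).mul hEcont
    have hint : IntervalIntegrable (fun u => exp ((s - u) • Λ) * N * E u)
        MeasureTheory.volume 0 s := hWcont.intervalIntegrable 0 s
    have hFTC := intervalIntegral.integral_eq_sub_of_hasDerivAt
      (f := G) (fun u _ => hG u) hint
    have hGs : G s = E s := by
      simp only [hGdef, sub_self, zero_smul, exp_zero, one_mul]
    have hG0 : G 0 = exp (s • Λ) := by
      simp only [hGdef, hE, sub_zero, zero_smul, exp_zero, mul_one]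
    have hEs : E s = exp (s • Λ) + ∫ u in (0:ℝ)..s, exp ((s - u) • Λ) * N * E u := by
      rw [hFTC, hGs, hG0]; abel
    -- now bound norms
    have hbnd : ‖∫ u in (0:ℝ)..s, exp ((s - u) • Λ) * N * E u‖
        ≤ |∫ u in (0:ℝ)..s, Real.exp (s * a) * (‖N‖ * g u)| := by
      refine le_trans (intervalIntegral.norm_integral_le_of_norm_le hs.1 ?_ ?_) (le_abs_self _)
      · refine MeasureTheory.ae_of_all _ fun u hu => ?_
        have hsu : (0:ℝ) ≤ s - u := by linarith [hu.2]
        calc ‖exp ((s - u) • Λ) * N * E u‖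
            ≤ ‖exp ((s - u) • Λ)‖ * ‖N‖ * ‖E u‖ :=
              le_trans (norm_mul_le _ _) (by gcongr; exact norm_mul_le _ _)
          _ ≤ Real.exp ((s - u) * a) * ‖N‖ * ‖E u‖ := by
              gcongr; exact norm_exp_smul_diagonal_le v hsu hv
          _ = Real.exp (s * a) * (‖N‖ * g u) := by
              rw [hg]
              have : Real.exp ((s - u) * a) = Real.exp (s * a) * Real.exp (-(u * a)) := by
                rw [← Real.exp_add]; ring_nf
              rw [this]; ring
      · exact (continuous_const.mul (continuous_const.mul hgcont)).intervalIntegrable 0 s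
    have hInt : (∫ u in (0:ℝ)..s, Real.exp (s * a) * (‖N‖ * g u))
        = Real.exp (s * a) * (‖N‖ * ∫ u in (0:ℝ)..s, g u) := by
      rw [intervalIntegral.integral_const_mul, intervalIntegral.integral_const_mul]
    have hψnn : 0 ≤ ∫ u in (0:ℝ)..s, g u :=
      intervalIntegral.integral_nonneg hs.1 (fun u _ => hgnonneg u)
    have habs : |∫ u in (0:ℝ)..s, Real.exp (s * a) * (‖N‖ * g u)|
        = Real.exp (s * a) * (‖N‖ * ∫ u in (0:ℝ)..s, g u) := by
      rw [hInt, abs_of_nonneg]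
      exact mul_nonneg (Real.exp_nonneg _) (mul_nonneg (norm_nonneg N) hψnn)
    have hEn : ‖E s‖ ≤ Real.exp (s * a) * (1 + ‖N‖ * ∫ u in (0:ℝ)..s, g u) := by
      calc ‖E s‖ ≤ ‖exp (s • Λ)‖ + ‖∫ u in (0:ℝ)..s, exp ((s - u) • Λ) * N * E u‖ := by
            rw [hEs]; exact norm_add_le _ _
        _ ≤ Real.exp (s * a) + Real.exp (s * a) * (‖N‖ * ∫ u in (0:ℝ)..s, g u) :=
            add_le_add (norm_exp_smul_diagonal_le v hs.1 hv) (hbnd.trans (le_of_eq habs))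
        _ = Real.exp (s * a) * (1 + ‖N‖ * ∫ u in (0:ℝ)..s, g u) := by ring
    show Real.exp (-(s * a)) * ‖E s‖ ≤ 1 + ‖N‖ * ∫ u in (0:ℝ)..s, g u
    calc Real.exp (-(s * a)) * ‖E s‖
        ≤ Real.exp (-(s * a)) * (Real.exp (s * a) * (1 + ‖N‖ * ∫ u in (0:ℝ)..s, g u)) :=
          mul_le_mul_of_nonneg_left hEn (Real.exp_nonneg _)
      _ = 1 + ‖N‖ * ∫ u in (0:ℝ)..s, g u := by
          rw [← mul_assoc, ← Real.exp_add]; norm_num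
  -- Gronwall
  set ψ : ℝ → ℝ := fun s => ∫ u in (0:ℝ)..s, g u with hψ
  have hψderiv : ∀ s, HasDerivAt ψ (g s) s := fun s =>
    (hgcont.integral_hasStrictDerivAt 0 s).hasDerivAt
  have hψnn : ∀ s, 0 ≤ s → 0 ≤ ψ s := fun s hs =>
    intervalIntegral.integral_nonneg hs fun u _ => hgnonneg u
  have hgron := norm_le_gronwallBound_of_norm_deriv_right_le
    (f := ψ) (f' := g) (δ := 0) (K := ‖N‖) (ε := 1) (a := 0) (b := 1)
    (fun s _ => ((hψderiv s).continuousAt).continuousWithinAt)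
    (fun s _ => (hψderiv s).hasDerivWithinAt)
    (by simp only [hψ, intervalIntegral.integral_same, norm_zero]; exact le_refl 0)
    (fun s hs => by
      rw [Real.norm_of_nonneg (hgnonneg s), Real.norm_of_nonneg (hψnn s hs.1)]
      have := key s ⟨hs.1, le_of_lt hs.2⟩
      linarith)
  have hψ1 : ψ 1 ≤ gronwallBound 0 ‖N‖ 1 1 := by
    have h := hgron 1 (by norm_num)
    rwa [Real.norm_of_nonneg (hψnn 1 (by norm_num)), sub_zero] at h
  have hg1 : g 1 ≤ Real.exp ‖N‖ := by
    have h := key 1 (by norm_num)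
    have h2 : g 1 ≤ 1 + ‖N‖ * gronwallBound 0 ‖N‖ 1 1 := by
      refine h.trans ?_
      have := mul_le_mul_of_nonneg_left hψ1 (norm_nonneg N)
      linarith
    refine h2.trans ?_
    rcases eq_or_ne ‖N‖ 0 with hN | hN
    · rw [hN, gronwallBound_K0]
      simp [hN, Real.exp_zero]
    · rw [gronwallBound_of_K_ne_0 hN]
      field_simp
      linarith
  have hfin : Real.exp a * g 1 = ‖E 1‖ := by
    simp only [hg]
    rw [← mul_assoc, ← Real.exp_add]
    norm_num
  have hE1 : exp (Matrix.diagonal v + N) = E 1 := by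
    simp only [hE, one_smul, hT, hΛ]
  rw [hE1, ← hfin, Real.exp_add]
  exact mul_le_mul_of_nonneg_left hg1 (Real.exp_nonneg _)


lemma tri_bound (T : Matrix (Fin m) (Fin m) ℂ)
    (htri : ∀ i j : Fin m, j < i → T i j = 0) {a : ℝ} (ha : 0 ≤ a)
    (hdiag : ∀ i, (T i i).re ≤ a) :
    ‖exp T‖ ≤ Real.exp (a + 1) * (1 + (m : ℝ) ^ 2 * ‖T‖) ^ (m - 1) := by
  have hTnn : (0:ℝ) ≤ ‖T‖ := norm_nonneg T
  have hx : (0:ℝ) ≤ (m : ℝ) ^ 2 * ‖T‖ := by positivity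
  set ε : ℝ := (1 + (m : ℝ) ^ 2 * ‖T‖)⁻¹ with hε
  have hden : (1:ℝ) ≤ 1 + (m : ℝ) ^ 2 * ‖T‖ := by linarith
  have hdenpos : (0:ℝ) < 1 + (m : ℝ) ^ 2 * ‖T‖ := by linarith
  have hεpos : 0 < ε := inv_pos.2 hdenpos
  have hεle : ε ≤ 1 := inv_le_one_of_one_le₀ hden
  have hεinv : ε⁻¹ = 1 + (m : ℝ) ^ 2 * ‖T‖ := by rw [hε, inv_inv]
  have hεne : (ε : ℂ) ≠ 0 := by
    simp only [ne_eq, Complex.ofReal_eq_zero]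
    exact ne_of_gt hεpos
  set d : Fin m → ℂ := fun i => (ε : ℂ) ^ (i : ℕ) with hd
  set d' : Fin m → ℂ := fun i => ((ε : ℂ)⁻¹) ^ (i : ℕ) with hd'
  have hdd'fun : ∀ i, d i * d' i = 1 := by
    intro i
    rw [hd, hd', ← mul_pow, mul_inv_cancel₀ hεne, one_pow]
  have hdd' : Matrix.diagonal d * Matrix.diagonal d' = 1 := by
    rw [Matrix.diagonal_mul_diagonal]
    have : (fun i => d i * d' i) = fun _ => (1:ℂ) := funext fun i => hdd'fun i
    rw [this, Matrix.diagonal_one]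
  have hd'd : Matrix.diagonal d' * Matrix.diagonal d = 1 := by
    rw [Matrix.diagonal_mul_diagonal]
    have : (fun i => d' i * d i) = fun _ => (1:ℂ) :=
      funext fun i => by rw [mul_comm]; exact hdd'fun i
    rw [this, Matrix.diagonal_one]
  set Du : (Matrix (Fin m) (Fin m) ℂ)ˣ := ⟨Matrix.diagonal d, Matrix.diagonal d', hdd', hd'd⟩
    with hDu
  set T' : Matrix (Fin m) (Fin m) ℂ := Matrix.diagonal d' * T * Matrix.diagonal d with hT'
  have hT'entry : ∀ i j, T' i j = d' i * T i j * d j := by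
    intro i j
    rw [hT', Matrix.mul_diagonal, Matrix.diagonal_mul]
  set Λ : Matrix (Fin m) (Fin m) ℂ := Matrix.diagonal (fun i => T i i) with hΛ
  set N : Matrix (Fin m) (Fin m) ℂ := T' - Λ with hN
  have hsplit : T' = Matrix.diagonal (fun i => T i i) + N := by rw [hN, hΛ]; abel
  have hNentry : ∀ i j, ‖N i j‖ ≤ ε * ‖T‖ := by
    intro i j
    rcases lt_trichotomy i j with hij | hij | hij
    · have hΛ0 : Λ i j = 0 := Matrix.diagonal_apply_ne _ (ne_of_lt hij)
      rw [hN, Matrix.sub_apply, hΛ0, sub_zero, hT'entry]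
      rw [norm_mul, norm_mul, hd, hd', norm_pow, norm_pow, norm_inv]
      have hnε : ‖(ε : ℂ)‖ = ε := by
        rw [Complex.norm_real, Real.norm_of_nonneg (le_of_lt hεpos)]
      rw [hnε]
      have hji : (i : ℕ) + ((j : ℕ) - (i : ℕ)) = (j : ℕ) := by omega
      have key : ε⁻¹ ^ (i : ℕ) * ‖T i j‖ * ε ^ (j : ℕ)
          = ε ^ ((j : ℕ) - (i : ℕ)) * ‖T i j‖ := by
        have hεi : ε ^ (i:ℕ) ≠ 0 := pow_ne_zero _ hεpos.ne'
        calc ε⁻¹ ^ (i:ℕ) * ‖T i j‖ * ε ^ (j:ℕ)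
            = ε⁻¹ ^ (i:ℕ) * ‖T i j‖ * (ε ^ (i:ℕ) * ε ^ ((j:ℕ) - (i:ℕ))) := by
              rw [← pow_add, hji]
          _ = (ε ^ (i:ℕ))⁻¹ * ε ^ (i:ℕ) * (ε ^ ((j:ℕ) - (i:ℕ)) * ‖T i j‖) := by
              rw [inv_pow]; ring
          _ = ε ^ ((j : ℕ) - (i : ℕ)) * ‖T i j‖ := by rw [inv_mul_cancel₀ hεi, one_mul]
      rw [key]
      have h1 : ε ^ ((j : ℕ) - (i : ℕ)) ≤ ε ^ 1 := by
        apply pow_le_pow_of_le_one (le_of_lt hεpos) hεle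
        omega
      rw [pow_one] at h1
      exact mul_le_mul h1 (entry_le T i j) (norm_nonneg _) (le_of_lt hεpos)
    · subst hij
      have : N i i = 0 := by
        rw [hN, Matrix.sub_apply, hT'entry, hΛ, Matrix.diagonal_apply_eq]
        have : d' i * T i i * d i = (d i * d' i) * T i i := by ring
        rw [this, hdd'fun, one_mul, sub_self]
      rw [this, norm_zero]
      positivity
    · have hT0 : T i j = 0 := htri i j hij
      have : N i j = 0 := by
        rw [hN, Matrix.sub_apply, hT'entry, hT0, hΛ, Matrix.diagonal_apply_ne _ (ne_of_gt hij)]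
        ring
      rw [this, norm_zero]
      positivity
  have hNnorm : ‖N‖ ≤ 1 := by
    refine le_trans (norm_le_sum N) ?_
    have h1 : ∀ i : Fin m, ∑ j, ‖N i j‖ ≤ (m : ℝ) * (ε * ‖T‖) := by
      intro i
      calc ∑ j, ‖N i j‖ ≤ ∑ _j : Fin m, ε * ‖T‖ := Finset.sum_le_sum fun j _ => hNentry i j
        _ = (m : ℝ) * (ε * ‖T‖) := by rw [Finset.sum_const, Finset.card_univ, Fintype.card_fin,
            nsmul_eq_mul]
    calc ∑ i, ∑ j, ‖N i j‖ ≤ ∑ _i : Fin m, (m : ℝ) * (ε * ‖T‖) :=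
          Finset.sum_le_sum fun i _ => h1 i
      _ = (m : ℝ) ^ 2 * ‖T‖ * ε := by
          rw [Finset.sum_const, Finset.card_univ, Fintype.card_fin, nsmul_eq_mul]; ring
      _ ≤ 1 := by
          rw [hε]
          rw [mul_inv_le_iff₀ hdenpos, one_mul]
          linarith
  have hcore : ‖exp T'‖ ≤ Real.exp (a + 1) := by
    rw [hsplit]
    refine le_trans (exp_core _ _ ha hdiag) ?_
    exact Real.exp_le_exp.2 (by linarith)
  have hconj : T = (Du : Matrix (Fin m) (Fin m) ℂ) * T'
      * ((Du⁻¹ : (Matrix (Fin m) (Fin m) ℂ)ˣ) : Matrix (Fin m) (Fin m) ℂ) := by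
    have h1 : (Du : Matrix (Fin m) (Fin m) ℂ) = Matrix.diagonal d := rfl
    have h2 : ((Du⁻¹ : (Matrix (Fin m) (Fin m) ℂ)ˣ) : Matrix (Fin m) (Fin m) ℂ)
        = Matrix.diagonal d' := rfl
    rw [h1, h2, hT']
    symm
    calc Matrix.diagonal d * (Matrix.diagonal d' * T * Matrix.diagonal d) * Matrix.diagonal d'
        = (Matrix.diagonal d * Matrix.diagonal d') * T
          * (Matrix.diagonal d * Matrix.diagonal d') := by noncomm_ring
      _ = T := by rw [hdd', one_mul, mul_one]

  have hexpconj : exp T = (Du : Matrix (Fin m) (Fin m) ℂ) * exp T'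
      * ((Du⁻¹ : (Matrix (Fin m) (Fin m) ℂ)ˣ) : Matrix (Fin m) (Fin m) ℂ) := by
    rw [hconj]
    exact Matrix.exp_units_conj Du T'
  have hDnorm : ‖(Du : Matrix (Fin m) (Fin m) ℂ)‖ ≤ 1 := by
    apply norm_diagonal_le _ zero_le_one
    intro i
    rw [hd, norm_pow]
    have hnε : ‖(ε : ℂ)‖ = ε := by
      rw [Complex.norm_real, Real.norm_of_nonneg (le_of_lt hεpos)]
    rw [hnε]
    exact pow_le_one₀ (le_of_lt hεpos) hεle
  have hD'norm : ‖((Du⁻¹ : (Matrix (Fin m) (Fin m) ℂ)ˣ) : Matrix (Fin m) (Fin m) ℂ)‖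
      ≤ (1 + (m : ℝ) ^ 2 * ‖T‖) ^ (m - 1) := by
    apply norm_diagonal_le
    · positivity
    intro i
    rw [hd', norm_pow, norm_inv]
    have hnε : ‖(ε : ℂ)‖ = ε := by
      rw [Complex.norm_real, Real.norm_of_nonneg (le_of_lt hεpos)]
    rw [hnε, ← hεinv]
    apply pow_le_pow_right₀
    · rw [hεinv]; exact hden
    · omega
  calc ‖exp T‖ ≤ ‖(Du : Matrix (Fin m) (Fin m) ℂ)‖ * ‖exp T'‖
        * ‖((Du⁻¹ : (Matrix (Fin m) (Fin m) ℂ)ˣ) : Matrix (Fin m) (Fin m) ℂ)‖ := by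
        rw [hexpconj]
        exact le_trans (norm_mul_le _ _) (by gcongr; exact norm_mul_le _ _)
    _ ≤ 1 * Real.exp (a + 1) * (1 + (m : ℝ) ^ 2 * ‖T‖) ^ (m - 1) :=
        mul_le_mul (mul_le_mul hDnorm hcore (norm_nonneg _) zero_le_one) hD'norm
          (norm_nonneg _) (by positivity)
    _ = Real.exp (a + 1) * (1 + (m : ℝ) ^ 2 * ‖T‖) ^ (m - 1) := by ring


lemma exists_flag : ∀ (k : ℕ) (E : Type) (_ : NormedAddCommGroup E)
    (_ : InnerProductSpace ℂ E) (_ : FiniteDimensional ℂ E),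
    finrank ℂ E = k → ∀ f : E →ₗ[ℂ] E,
    ∃ b : OrthonormalBasis (Fin k) ℂ E,
      ∀ j, f (b j) ∈ Submodule.span ℂ (⇑b '' Set.Iic j) := by
  intro k
  induction k with
  | zero =>
    intro E _ _ _ hE f
    have hsub : ∀ x : E, x = 0 := by
      rw [← finrank_zero_iff_forall_zero (K := ℂ)]; exact hE
    have horth : Orthonormal ℂ (fun i : Fin 0 => (0 : E)) := by
      constructor
      · intro i; exact i.elim0
      · intro i; exact i.elim0
    refine ⟨OrthonormalBasis.mk horth ?_, fun j => j.elim0⟩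
    intro x _
    simp [hsub x]
  | succ k ih =>
    intro E _ _ _ hE f
    have hnt : Nontrivial E := by
      apply nontrivial_of_finrank_pos (R := ℂ)
      omega
    obtain ⟨c, hc⟩ := Module.End.exists_eigenvalue f
    obtain ⟨v, hv⟩ := hc.exists_hasEigenvector
    have hvne : v ≠ 0 := hv.right
    set u : E := ‖v‖⁻¹ • v with hu
    have hune : u ≠ 0 := by
      rw [hu]
      exact smul_ne_zero (inv_ne_zero (norm_ne_zero_iff.2 hvne)) hvne
    have hu1 : ‖u‖ = 1 := norm_smul_inv_norm hvne
    have hfu : f u = c • u := by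
      rw [hu, LinearMap.map_smul_of_tower, hv.apply_eq_smul, smul_comm]
    set W : Submodule ℂ E := (ℂ ∙ u)ᗮ with hW
    have hWrank : finrank ℂ W = k := by
      have h1 : finrank ℂ (ℂ ∙ u) + finrank ℂ W = finrank ℂ E :=
        Submodule.finrank_add_finrank_orthogonal (K := ℂ ∙ u)
      rw [finrank_span_singleton hune, hE] at h1
      omega
    set g : W →ₗ[ℂ] W := (Submodule.orthogonalProjection W).toLinearMap ∘ₗ f ∘ₗ W.subtype with hg
    obtain ⟨b', hb'⟩ := ih W inferInstance inferInstance inferInstance hWrank g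
    set w : Fin (k + 1) → E := Fin.cons u (fun i => (b' i : E)) with hw
    have hw0 : w 0 = u := rfl
    have hwsucc : ∀ i : Fin k, w i.succ = (b' i : E) := fun i => rfl
    have hbW : ∀ i : Fin k, (b' i : E) ∈ W := fun i => (b' i).2
    have huinner : ∀ i : Fin k, ⟪u, (b' i : E)⟫ = 0 := by
      intro i
      have h2 : ((b' i : E)) ∈ (ℂ ∙ u)ᗮ := hbW i
      rw [Submodule.mem_orthogonal] at h2
      exact h2 u (Submodule.mem_span_singleton_self u)
    have horth : Orthonormal ℂ w := by
      rw [orthonormal_iff_ite]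
      intro i j
      induction i using Fin.cases with
      | zero =>
        induction j using Fin.cases with
        | zero =>
          simp only [hw0, if_pos rfl]
          rw [inner_self_eq_norm_sq_to_K, hu1]
          norm_num
        | succ j =>
          rw [hw0, hwsucc, if_neg (Fin.succ_ne_zero j).symm]
          exact huinner j
      | succ i =>
        induction j using Fin.cases with
        | zero =>
          rw [hw0, hwsucc, if_neg (Fin.succ_ne_zero i)]
          rw [← inner_conj_symm, huinner i, map_zero]
        | succ j =>
          rw [hwsucc, hwsucc]
          have := (orthonormal_iff_ite.1 b'.orthonormal) i j
          rw [Submodule.coe_inner] at this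
          rw [this]
          simp [Fin.succ_inj]
    have hspan : ⊤ ≤ Submodule.span ℂ (Set.range w) := by
      rw [← Submodule.sup_orthogonal_of_hasOrthogonalProjection (K := ℂ ∙ u)]
      apply sup_le
      · rw [Submodule.span_singleton_le_iff_mem]
        exact Submodule.subset_span ⟨0, hw0⟩
      · show W ≤ Submodule.span ℂ (Set.range w)
        have h1 : W = Submodule.map W.subtype ⊤ := (Submodule.map_subtype_top W).symm
        rw [h1, ← b'.toBasis.span_eq, Submodule.map_span]
        apply Submodule.span_mono
        rintro x ⟨y, ⟨i, rfl⟩, rfl⟩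
        exact ⟨i.succ, by rw [hwsucc]; simp⟩
    set b : OrthonormalBasis (Fin (k + 1)) ℂ E := OrthonormalBasis.mk horth hspan with hb
    have hbeq : ∀ i, b i = w i := fun i => by rw [hb, OrthonormalBasis.coe_mk]
    refine ⟨b, ?_⟩
    intro j
    have himg : ⇑b '' Set.Iic j = w '' Set.Iic j := by
      apply Set.image_congr
      intro i _; exact hbeq i
    rw [hbeq, himg]
    induction j using Fin.cases with
    | zero =>
      rw [hw0, hfu]
      exact Submodule.smul_mem _ _ (Submodule.subset_span ⟨0, Set.mem_Iic.2 (le_refl _), hw0⟩)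
    | succ j =>
      rw [hwsucc]
      have hdec : (Submodule.orthogonalProjection W (f (b' j : E)) : E)
          + (Submodule.orthogonalProjection Wᗮ (f (b' j : E)) : E) = f (b' j : E) :=
        Submodule.starProjection_add_starProjection_orthogonal (K := W) (f (b' j : E))
      rw [← hdec]
      apply Submodule.add_mem
      · -- projection onto W
        have hgb : (Submodule.orthogonalProjection W (f (b' j : E)) : E) = ((g (b' j) : W) : E) := by
          rw [hg]; rfl
        rw [hgb]
        have := hb' j
        have hmap : ((g (b' j) : W) : E) ∈ Submodule.map W.subtype
            (Submodule.span ℂ (⇑b' '' Set.Iic j)) :=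
          Submodule.mem_map_of_mem this
        rw [Submodule.map_span] at hmap
        refine Submodule.span_mono ?_ hmap
        rintro x ⟨y, ⟨i, hi, rfl⟩, rfl⟩
        exact ⟨i.succ, Set.mem_Iic.2 (Fin.succ_le_succ_iff.2 (Set.mem_Iic.1 hi)), (hwsucc i).symm⟩
      · -- projection onto Wᗮ = span u
        have hmem : (Submodule.orthogonalProjection Wᗮ (f (b' j : E)) : E) ∈ (ℂ ∙ u) := by
          have h3 : (Submodule.orthogonalProjection Wᗮ (f (b' j : E)) : E) ∈ Wᗮ :=
            (Submodule.orthogonalProjection Wᗮ (f (b' j : E))).2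
          have h4 : Wᗮ = ℂ ∙ u := Submodule.orthogonal_orthogonal (ℂ ∙ u)
          exact h4.le h3
        have hle : (ℂ ∙ u) ≤ Submodule.span ℂ (w '' Set.Iic j.succ) := by
          rw [Submodule.span_singleton_le_iff_mem]
          exact Submodule.subset_span ⟨0, Set.mem_Iic.2 (Fin.zero_le _), hw0⟩
        exact hle hmem
  

lemma schur (B : Matrix (Fin m) (Fin m) ℂ) :
    ∃ U T : Matrix (Fin m) (Fin m) ℂ, U ∈ Matrix.unitaryGroup (Fin m) ℂ ∧
      (∀ i j : Fin m, j < i → T i j = 0) ∧ (∀ i, T i i ∈ spectrum ℂ B) ∧ B = U * T * Uᴴ := by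
  obtain ⟨b, hb⟩ := exists_flag m (EuclideanSpace ℂ (Fin m)) inferInstance inferInstance
    inferInstance finrank_euclideanSpace_fin (Matrix.toEuclideanLin B)
  set U : Matrix (Fin m) (Fin m) ℂ := Matrix.of (fun i j => b j i) with hU
  have hUU : Uᴴ * U = 1 := by
    ext j k
    rw [Matrix.mul_apply, Matrix.one_apply]
    have h1 : ∀ i, Uᴴ j i * U i k = (starRingEnd ℂ) (b j i) * b k i := by
      intro i
      rw [Matrix.conjTranspose_apply, hU]
      rfl
    rw [Finset.sum_congr rfl (fun i _ => h1 i)]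
    have h2 : ∑ i, (starRingEnd ℂ) (b j i) * b k i = ⟪b j, b k⟫ := by
      rw [PiLp.inner_apply]
      congr 1
      funext i
      rw [RCLike.inner_apply]
      ring
    rw [h2, orthonormal_iff_ite.1 b.orthonormal j k]
  have hUmem : U ∈ Matrix.unitaryGroup (Fin m) ℂ := Matrix.mem_unitaryGroup_iff'.2 hUU
  have hUU' : U * Uᴴ = 1 := Matrix.mem_unitaryGroup_iff.1 hUmem
  set T : Matrix (Fin m) (Fin m) ℂ := Uᴴ * B * U with hT
  have hB : B = U * T * Uᴴ := by
    rw [hT]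
    calc B = (U * Uᴴ) * B * (U * Uᴴ) := by rw [hUU', one_mul, mul_one]
      _ = U * (Uᴴ * B * U) * Uᴴ := by noncomm_ring
  have hTentry : ∀ i j, T i j = ⟪b i, Matrix.toEuclideanLin B (b j)⟫ := by
    intro i j
    have hy : ∀ p, (Matrix.toEuclideanLin B (b j)) p = ∑ q, B p q * b j q := fun p => rfl
    calc T i j = ∑ q, (∑ p, (starRingEnd ℂ) (b i p) * B p q) * b j q := by
          rw [hT]
          simp only [Matrix.mul_apply, Matrix.conjTranspose_apply, hU, Matrix.of_apply,
            RCLike.star_def]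
      _ = ∑ p, (starRingEnd ℂ) (b i p) * (∑ q, B p q * b j q) := by
          simp_rw [Finset.sum_mul, Finset.mul_sum]
          rw [Finset.sum_comm]
          simp_rw [mul_assoc]
      _ = ⟪b i, Matrix.toEuclideanLin B (b j)⟫ := by
          rw [PiLp.inner_apply]
          refine (Finset.sum_congr rfl fun p _ => ?_).symm
          rw [hy p]
          rw [RCLike.inner_apply]
          ring
  have htri : ∀ i j : Fin m, j < i → T i j = 0 := by
    intro i j hij
    have hker : Submodule.span ℂ (⇑b '' Set.Iic j)
        ≤ LinearMap.ker ((innerSL ℂ (b i) : EuclideanSpace ℂ (Fin m) →L[ℂ] ℂ) :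
          EuclideanSpace ℂ (Fin m) →ₗ[ℂ] ℂ) := by
      rw [Submodule.span_le]
      rintro y ⟨kk, hk, rfl⟩
      simp only [SetLike.mem_coe, LinearMap.mem_ker]
      have hne : i ≠ kk := fun h => absurd (h ▸ Set.mem_Iic.1 hk) (not_le.2 hij)
      have h3 := orthonormal_iff_ite.1 b.orthonormal i kk
      rw [if_neg hne] at h3
      exact h3
    have h4 := hker (hb j)
    rw [LinearMap.mem_ker] at h4
    rw [hTentry i j]
    exact h4
  have hspec : ∀ i, T i i ∈ spectrum ℂ B := by
    intro i
    set Uu : (Matrix (Fin m) (Fin m) ℂ)ˣ := ⟨U, Uᴴ, hUU', hUU⟩ with hUu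
    have hconj : (↑Uu⁻¹ : Matrix (Fin m) (Fin m) ℂ) * B * (↑Uu : Matrix (Fin m) (Fin m) ℂ)
        = T := rfl
    rw [← spectrum.units_conjugate' (u := Uu) (a := B), hconj]
    rw [spectrum.mem_iff]
    intro hun
    rw [Matrix.isUnit_iff_isUnit_det] at hun
    have hdet : (algebraMap ℂ (Matrix (Fin m) (Fin m) ℂ) (T i i) - T).det
        = ∏ j, (algebraMap ℂ (Matrix (Fin m) (Fin m) ℂ) (T i i) - T) j j := by
      apply Matrix.det_of_upperTriangular
      intro p q hpq
      rw [Matrix.sub_apply, Matrix.algebraMap_matrix_apply, if_neg (show ¬ p = q by intro h; subst h; exact lt_irrefl _ hpq),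
        htri p q hpq, sub_zero]
    rw [hdet] at hun
    have hzero : ∏ j, (algebraMap ℂ (Matrix (Fin m) (Fin m) ℂ) (T i i) - T) j j = 0 := by
      apply Finset.prod_eq_zero (Finset.mem_univ i)
      rw [Matrix.sub_apply, Matrix.algebraMap_matrix_apply, if_pos rfl]
      simp
    rw [hzero] at hun
    exact not_isUnit_zero hun
  exact ⟨U, T, hUmem, htri, hspec, hB⟩


lemma key_bound (hm : 1 ≤ m) (B : Matrix (Fin m) (Fin m) ℂ) {s aa : ℝ} (hs : 0 ≤ s)
    (ha : 0 ≤ aa) (hmB : ∀ μ ∈ spectrum ℂ B, s * μ.re ≤ aa) :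
    ‖exp (s • B)‖ ≤ Real.exp (aa + 1) * (1 + (m : ℝ) ^ 2 * (s * ‖B‖)) ^ (m - 1) := by
  obtain ⟨U, T, hUmem, htri, hspec, hB⟩ := schur B
  have hne : Nonempty (Fin m) := ⟨⟨0, hm⟩⟩
  have hnt : Nontrivial (Matrix (Fin m) (Fin m) ℂ) := inferInstance
  have hUnorm : ‖U‖ = 1 := CStarRing.norm_coe_unitary (⟨U, hUmem⟩ : unitary _)
  have hUHnorm : ‖Uᴴ‖ = 1 := by rw [Matrix.l2_opNorm_conjTranspose]; exact hUnorm
  have hUU : Uᴴ * U = 1 := Matrix.mem_unitaryGroup_iff'.1 hUmem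
  have hUU' : U * Uᴴ = 1 := Matrix.mem_unitaryGroup_iff.1 hUmem
  have hTeq : T = Uᴴ * B * U := by
    rw [hB]
    calc T = (Uᴴ * U) * T * (Uᴴ * U) := by rw [hUU, one_mul, mul_one]
      _ = Uᴴ * (U * T * Uᴴ) * U := by noncomm_ring
  have hTnorm : ‖T‖ ≤ ‖B‖ := by
    calc ‖T‖ = ‖Uᴴ * B * U‖ := by rw [← hTeq]
      _ ≤ ‖Uᴴ * B‖ * ‖U‖ := Matrix.l2_opNorm_mul _ _
      _ ≤ ‖Uᴴ‖ * ‖B‖ * ‖U‖ := by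
          gcongr
          exact Matrix.l2_opNorm_mul _ _
      _ = ‖B‖ := by rw [hUnorm, hUHnorm, one_mul, mul_one]
  set Uu : (Matrix (Fin m) (Fin m) ℂ)ˣ := ⟨U, Uᴴ, hUU', hUU⟩ with hUu
  have hsmul : s • B = (Uu : Matrix (Fin m) (Fin m) ℂ) * (s • T)
      * ((Uu⁻¹ : (Matrix (Fin m) (Fin m) ℂ)ˣ) : Matrix (Fin m) (Fin m) ℂ) := by
    have h1 : (Uu : Matrix (Fin m) (Fin m) ℂ) = U := rfl
    have h2 : ((Uu⁻¹ : (Matrix (Fin m) (Fin m) ℂ)ˣ) : Matrix (Fin m) (Fin m) ℂ) = Uᴴ := rfl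
    rw [h1, h2, hB, ← smul_mul_assoc, ← mul_smul_comm]
  have hexp : exp (s • B) = (Uu : Matrix (Fin m) (Fin m) ℂ) * exp (s • T)
      * ((Uu⁻¹ : (Matrix (Fin m) (Fin m) ℂ)ˣ) : Matrix (Fin m) (Fin m) ℂ) := by
    rw [hsmul]
    exact Matrix.exp_units_conj Uu (s • T)
  have htri' : ∀ i j : Fin m, j < i → (s • T) i j = 0 := by
    intro i j hij
    rw [Matrix.smul_apply, htri i j hij, smul_zero]
  have hdiag' : ∀ i, ((s • T) i i).re ≤ aa := by
    intro i
    rw [Matrix.smul_apply]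
    have : (s • T i i).re = s * (T i i).re := Complex.smul_re _ _
    rw [this]
    exact hmB _ (hspec i)
  have hbound := tri_bound (s • T) htri' ha hdiag'
  have hsTnorm : ‖s • T‖ ≤ s * ‖B‖ := by
    rw [norm_smul, Real.norm_of_nonneg hs]
    exact mul_le_mul_of_nonneg_left hTnorm hs
  calc ‖exp (s • B)‖
      ≤ ‖(Uu : Matrix (Fin m) (Fin m) ℂ)‖ * ‖exp (s • T)‖
        * ‖((Uu⁻¹ : (Matrix (Fin m) (Fin m) ℂ)ˣ) : Matrix (Fin m) (Fin m) ℂ)‖ := by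
        rw [hexp]
        exact le_trans (Matrix.l2_opNorm_mul _ _)
          (by gcongr; exact Matrix.l2_opNorm_mul _ _)
    _ = ‖exp (s • T)‖ := by
        have h1 : ‖(Uu : Matrix (Fin m) (Fin m) ℂ)‖ = 1 := hUnorm
        have h2 : ‖((Uu⁻¹ : (Matrix (Fin m) (Fin m) ℂ)ˣ) : Matrix (Fin m) (Fin m) ℂ)‖ = 1 :=
          hUHnorm
        rw [h1, h2, one_mul, mul_one]
    _ ≤ Real.exp (aa + 1) * (1 + (m : ℝ) ^ 2 * ‖s • T‖) ^ (m - 1) := hbound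
    _ ≤ Real.exp (aa + 1) * (1 + (m : ℝ) ^ 2 * (s * ‖B‖)) ^ (m - 1) := by
        gcongr

end ExpPolyAux

open ExpPolyAux

/-- Quantitative form of (2.3) ⇒ (2.4) in Proposition 2.2: if `‖A(ξ)‖ ≤ D'(1+|ξ|)^l` and
`max Re σ(A(ξ)) ≤ C(1 + log(1+|ξ|))`, then for every `T > 0` there is `D > 0` with
`‖exp(tA(ξ))‖ ≤ D (1+|ξ|)^{TC + l(m-1)}` for `t ∈ [0,T]`, `ξ ∈ ℝⁿ`. -/
theorem exp_poly_bound_of_log_spectral_bound (m n : ℕ) (hm : 1 ≤ m) (hn : 1 ≤ n)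
    (A : EuclideanSpace ℝ (Fin n) → Matrix (Fin m) (Fin m) ℂ)
    (D' : ℝ) (hD' : 0 < D') (l : ℕ)
    (hA : ∀ ξ : EuclideanSpace ℝ (Fin n), ‖A ξ‖ ≤ D' * (1 + ‖ξ‖) ^ l)
    (C : ℝ) (hC : 0 < C)
    (hspec : ∀ ξ : EuclideanSpace ℝ (Fin n), ∀ lam ∈ spectrum ℂ (A ξ),
      lam.re ≤ C * (1 + Real.log (1 + ‖ξ‖))) :
    ∀ T : ℝ, 0 < T → ∃ D : ℝ, 0 < D ∧
      ∀ t ∈ Set.Icc (0:ℝ) T, ∀ ξ : EuclideanSpace ℝ (Fin n),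
        ‖NormedSpace.exp (t • A ξ)‖ ≤
          D * (1 + ‖ξ‖) ^ (T * C + (l : ℝ) * (m - 1 : ℕ)) := by
  intro T hT
  refine ⟨Real.exp (T * C + 1) * (1 + (m : ℝ) ^ 2 * T * D') ^ (m - 1), by positivity, ?_⟩
  intro t ht ξ
  have hx0 : (0:ℝ) < 1 + ‖ξ‖ := by positivity
  have hx1 : (1:ℝ) ≤ 1 + ‖ξ‖ := by linarith [norm_nonneg ξ]
  have hlog : (0:ℝ) ≤ Real.log (1 + ‖ξ‖) := Real.log_nonneg hx1
  set c : ℝ := C * (1 + Real.log (1 + ‖ξ‖)) with hc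
  have hc0 : 0 ≤ c := by
    rw [hc]
    exact mul_nonneg hC.le (by linarith)
  have haa : (0:ℝ) ≤ T * c := mul_nonneg hT.le hc0
  have hmB : ∀ μ ∈ spectrum ℂ (A ξ), t * μ.re ≤ T * c := by
    intro μ hμ
    calc t * μ.re ≤ t * c := mul_le_mul_of_nonneg_left (hspec ξ μ hμ) ht.1
      _ ≤ T * c := mul_le_mul_of_nonneg_right ht.2 hc0
  have hkey := key_bound hm (A ξ) ht.1 haa hmB
  -- rewrite exp ℂ as exp ℝ
  have hXC : NormedSpace.exp (t • A ξ) = exp (t • A ξ) :=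
    rfl
  rw [hXC]
  have hAB : t * ‖A ξ‖ ≤ T * (D' * (1 + ‖ξ‖) ^ l) :=
    mul_le_mul ht.2 (hA ξ) (norm_nonneg _) hT.le
  have hp1 : (1:ℝ) ≤ (1 + ‖ξ‖) ^ l := one_le_pow₀ hx1
  have hbase : 1 + (m:ℝ) ^ 2 * (t * ‖A ξ‖) ≤ (1 + (m:ℝ) ^ 2 * T * D') * (1 + ‖ξ‖) ^ l := by
    have h1 : (m:ℝ) ^ 2 * (t * ‖A ξ‖) ≤ (m:ℝ) ^ 2 * (T * (D' * (1 + ‖ξ‖) ^ l)) :=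
      mul_le_mul_of_nonneg_left hAB (by positivity)
    have h2 : (0:ℝ) ≤ (m:ℝ) ^ 2 * T * D' := by positivity
    nlinarith [h1, h2, hp1]
  have hstep : (1 + (m:ℝ) ^ 2 * (t * ‖A ξ‖)) ^ (m - 1)
      ≤ (1 + (m:ℝ) ^ 2 * T * D') ^ (m - 1) * ((1 + ‖ξ‖) ^ l) ^ (m - 1) := by
    rw [← mul_pow]
    have h0 : (0:ℝ) ≤ (m:ℝ) ^ 2 * (t * ‖A ξ‖) :=
      mul_nonneg (by positivity) (mul_nonneg ht.1 (norm_nonneg _))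
    apply pow_le_pow_left₀ (by linarith) hbase
  have hexpaa : Real.exp (T * c + 1) = Real.exp (T * C + 1) * (1 + ‖ξ‖) ^ (T * C) := by
    rw [hc, Real.rpow_def_of_pos hx0, ← Real.exp_add]
    congr 1
    ring
  calc ‖exp (t • A ξ)‖
      ≤ Real.exp (T * c + 1) * (1 + (m:ℝ) ^ 2 * (t * ‖A ξ‖)) ^ (m - 1) := hkey
    _ ≤ Real.exp (T * c + 1)
        * ((1 + (m:ℝ) ^ 2 * T * D') ^ (m - 1) * ((1 + ‖ξ‖) ^ l) ^ (m - 1)) :=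
        mul_le_mul_of_nonneg_left hstep (Real.exp_nonneg _)
    _ = Real.exp (T * C + 1) * (1 + (m:ℝ) ^ 2 * T * D') ^ (m - 1)
        * ((1 + ‖ξ‖) ^ (T * C) * (1 + ‖ξ‖) ^ ((l * (m - 1) : ℕ))) := by
        rw [hexpaa, ← pow_mul]
        ring
    _ = Real.exp (T * C + 1) * (1 + (m:ℝ) ^ 2 * T * D') ^ (m - 1)
        * (1 + ‖ξ‖) ^ (T * C + (l : ℝ) * (m - 1 : ℕ)) := by
        congr 1
        rw [← Real.rpow_natCast (1 + ‖ξ‖) (l * (m - 1)), ← Real.rpow_add hx0]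
        congr 1
        push_cast
        ring
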